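/- Let h(x) = Φ_{d₁}(x)^{e₁} · Φ_{d₂}(x)^{e₂} ⋯ Φ_{d_m}(x)^{e_m} with d₁,…,d_m distinct positive integers and e₁,…,e_m positive integers, and suppose h(p) ∣ h(p^p) for every prime p. Let 𝒜 = {d₁,…,d_m}, and let p_k be the largest prime dividing lcm(d₁,…,d_m). Let d ∈ 𝒜 be such that p_k ∣ d, and let p_i be a prime with p_i ∣ d and (p_i, d) ≠ (2,6). Then d/p_i ∈ 𝒜. -/

import Mathlib

open Polynomial

open Finset in

open Finset in
lemma castEval (n : ℕ) (a : ℤ) (q : ℕ) :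
    (((cyclotomic n ℤ).eval a : ℤ) : ZMod q) = (cyclotomic n (ZMod q)).eval ((a : ℤ) : ZMod q) := by
  rw [← map_cyclotomic_int n (ZMod q), eval_intCast_map]
  rfl

open Finset in
lemma orderOfCast {q : ℕ} (hq : q.Prime) {n : ℕ} (hn : n ≠ 0) {a : ℤ}
    (h : (q : ℤ) ∣ (cyclotomic n ℤ).eval a) : orderOf ((a : ℤ) : ZMod q) = ordCompl[q] n := by
  haveI : Fact q.Prime := ⟨hq⟩
  have hm : ¬ q ∣ ordCompl[q] n := Nat.not_dvd_ordCompl hq hn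
  haveI : NeZero ((ordCompl[q] n : ℕ) : ZMod q) :=
    ⟨by rwa [Ne, ZMod.natCast_eq_zero_iff]⟩
  have hroot : IsRoot (cyclotomic (q ^ n.factorization q * ordCompl[q] n) (ZMod q))
      ((a : ℤ) : ZMod q) := by
    rw [Nat.ordProj_mul_ordCompl_eq_self]
    have := (ZMod.intCast_zmod_eq_zero_iff_dvd _ q).2 h
    rw [castEval] at this
    exact this
  rw [isRoot_cyclotomic_prime_pow_mul_iff_of_charP] at hroot
  exact hroot.eq_orderOf.symm


open Finset in
lemma powModEq (x : ℤ) (q : ℕ) (hx : (q : ℤ) ∣ x - 1) (j : ℕ) :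
    ((q : ℤ))^2 ∣ x^j - (1 + j*(x-1)) := by
  induction j with
  | zero => simp
  | succ j ih =>
    have h2 : ((q:ℤ))^2 ∣ (x-1)^2 := pow_dvd_pow_of_dvd hx 2
    have key : x^(j+1) - (1 + (j+1 : ℕ)*(x-1))
        = (x^j - (1 + j*(x-1))) * x + ((j:ℤ)*(x-1)^2) := by
      push_cast
      ring
    rw [key]
    exact dvd_add (Dvd.dvd.mul_right ih x) (Dvd.dvd.mul_left h2 _)

open Finset in
lemma geomSumNotSqDvd {q : ℕ} (hq : q.Prime) {x : ℤ} (hx : (q : ℤ) ∣ x - 1)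
    (h2 : q = 2 → (4 : ℤ) ∣ x - 1) : ¬ ((q : ℤ))^2 ∣ ∑ j ∈ range q, x^j := by
  have key : ((q:ℤ))^2 ∣ (∑ j ∈ range q, x^j) - ((q : ℤ) + (x-1) * (∑ j ∈ range q, (j : ℤ))) := by
    have : ∑ j ∈ range q, (x^j - (1 + (j:ℤ)*(x-1)))
        = (∑ j ∈ range q, x^j) - ((q : ℤ) + (x-1) * (∑ j ∈ range q, (j : ℤ))) := by
      rw [Finset.sum_sub_distrib, Finset.sum_add_distrib, Finset.sum_const, card_range,
        nsmul_eq_mul, mul_one, ← Finset.sum_mul, mul_comm (∑ j ∈ range q, (j:ℤ)) (x-1)]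
    rw [← this]
    exact Finset.dvd_sum fun j _ => powModEq x q hx j
  have hT : ((q:ℤ))^2 ∣ (x-1) * (∑ j ∈ range q, (j : ℤ)) := by
    rcases hq.eq_two_or_odd' with rfl | hodd
    · have : (∑ j ∈ range 2, (j : ℤ)) = 1 := by decide
      rw [this, mul_one]
      have := h2 rfl
      calc ((2:ℕ):ℤ)^2 = 4 := by norm_num
        _ ∣ x - 1 := this
    · have hsum : (∑ j ∈ range q, (j : ℤ)) = ((∑ j ∈ range q, j : ℕ) : ℤ) := by push_cast; rfl
      have hq2 : (∑ j ∈ range q, j) * 2 = q * (q - 1) := Finset.sum_range_id_mul_two q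
      have hqdvd : q ∣ (∑ j ∈ range q, j) := by
        have h1 : q ∣ (∑ j ∈ range q, j) * 2 := hq2 ▸ Dvd.intro _ rfl
        exact (Nat.Coprime.dvd_of_dvd_mul_right
          ((Nat.Prime.coprime_iff_not_dvd hq).2 (fun hdvd => by
            have h2' := (Nat.prime_dvd_prime_iff_eq hq Nat.prime_two).1 hdvd
            rw [h2'] at hodd
            simp [Nat.odd_iff] at hodd)) h1)
      have : ((q:ℤ))^2 = (q : ℤ) * (q : ℤ) := sq (q:ℤ) ▸ rfl
      rw [sq]
      exact mul_dvd_mul hx (hsum ▸ Int.natCast_dvd_natCast.2 hqdvd)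
  intro hS
  have : ((q:ℤ))^2 ∣ (q : ℤ) := by
    have := dvd_sub hS key
    simp only [sub_sub_cancel] at this
    exact (dvd_add_right hT).mp (by rwa [add_comm] at this)
  have hqpos : (0:ℤ) < (q:ℤ) := by exact_mod_cast hq.pos
  have := Int.le_of_dvd hqpos this
  have hq2 := hq.two_le
  nlinarith [sq_nonneg (q:ℤ)]


open Finset in
lemma cycloDvdPowSubOne {n : ℕ} (hn : n ≠ 0) (a : ℤ) :
    (cyclotomic n ℤ).eval a ∣ a^n - 1 := by
  have := prod_cyclotomic_eq_X_pow_sub_one (Nat.pos_of_ne_zero hn) ℤ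
  have h2 := congrArg (Polynomial.eval a) this
  rw [eval_prod, eval_sub, eval_pow, eval_X, eval_one] at h2
  rw [← h2]
  exact Finset.dvd_prod_of_mem _ (Nat.mem_divisors_self n hn)

open Finset in
lemma evalMulDvd {c d : ℕ} (hcd : c ∣ d) (hlt : c < d) (hd : d ≠ 0) (a : ℤ) :
    (cyclotomic d ℤ).eval a * (a^c - 1) ∣ a^d - 1 := by
  have hc : c ≠ 0 := by
    rintro rfl
    exact hd (Nat.eq_zero_of_zero_dvd hcd)
  have h1 := congrArg (Polynomial.eval a) (prod_cyclotomic_eq_X_pow_sub_one (Nat.pos_of_ne_zero hc) ℤ)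
  have h2 := congrArg (Polynomial.eval a) (prod_cyclotomic_eq_X_pow_sub_one (Nat.pos_of_ne_zero hd) ℤ)
  rw [eval_prod, eval_sub, eval_pow, eval_X, eval_one] at h1 h2
  rw [← h1, ← h2]
  have hdd : d ∉ c.divisors := fun hmem => absurd (Nat.divisor_le hmem) (not_le.2 hlt)
  have hsub : insert d c.divisors ⊆ d.divisors := by
    intro f hf
    rcases Finset.mem_insert.1 hf with h | hf
    · exact h ▸ Nat.mem_divisors_self d hd
    · exact Nat.mem_divisors.2 ⟨(Nat.mem_divisors.1 hf).1.trans hcd, hd⟩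
  calc (cyclotomic d ℤ).eval a * ∏ f ∈ c.divisors, (cyclotomic f ℤ).eval a
      = ∏ f ∈ insert d c.divisors, (cyclotomic f ℤ).eval a := by rw [Finset.prod_insert hdd]
    _ ∣ ∏ f ∈ d.divisors, (cyclotomic f ℤ).eval a := Finset.prod_dvd_prod_of_subset _ _ _ hsub

open Finset in
lemma cycloMulPrimeEval {q n : ℕ} (hq : q.Prime) (hqn : q ∣ n) (a : ℤ) :
    (cyclotomic (n*q) ℤ).eval a = (cyclotomic n ℤ).eval (a^q) := by
  rw [← cyclotomic_expand_eq_cyclotomic hq hqn ℤ, expand_eval]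

open Finset in
lemma cycloPrimePowEval {q m : ℕ} (hq : q.Prime) {k : ℕ} (hk : 1 ≤ k) (a : ℤ) :
    (cyclotomic (q^k*m) ℤ).eval a = (cyclotomic (q*m) ℤ).eval (a^(q^(k-1))) := by
  induction k, hk using Nat.le_induction generalizing a with
  | base => simp
  | succ k hk ih =>
    have h1 : q^(k+1)*m = (q^k*m)*q := by ring
    have h2 : q ∣ q^k*m := Dvd.dvd.mul_right (dvd_pow_self q (by omega)) m
    have hkk : q * q^(k-1) = q^(k+1-1) := by
      rw [← pow_succ']
      congr 1
      omega
    rw [h1, cycloMulPrimeEval hq h2, ih, ← pow_mul, hkk]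

open Finset in
lemma threeMul (Q : ℕ) (h : 5 ≤ Q) : 3*Q + 1 ≤ 2^Q := by
  induction Q, h using Nat.le_induction with
  | base => norm_num
  | succ n hn ih =>
    have h5 : 2^(n+1) = 2^n * 2 := pow_succ 2 n
    have h6 : 1 ≤ 2^n := Nat.one_le_two_pow
    obtain ⟨u, hu⟩ : ∃ u, 2^n = u := ⟨_, rfl⟩
    rw [h5, hu]
    rw [hu] at ih h6
    omega

open Finset in
lemma zsygmondy {p d : ℕ} (hp : p.Prime) (hd0 : 0 < d) (hpd : p ∣ d)
    (h26 : ¬(p = 2 ∧ d = 6)) :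
    ∃ q : ℕ, q.Prime ∧ ¬ q ∣ d ∧ (q : ℤ) ∣ (cyclotomic d ℤ).eval (p : ℤ) := by
  have hd2 : 2 ≤ d := le_trans hp.two_le (Nat.le_of_dvd hd0 hpd)
  rcases eq_or_lt_of_le hd2 with hd2' | hd3
  · -- d = 2
    refine ⟨3, by norm_num, by omega, ?_⟩
    have hp2 : p = 2 := ((Nat.prime_dvd_prime_iff_eq hp Nat.prime_two).1 (hd2' ▸ hpd))
    rw [← hd2', hp2, cyclotomic_two]
    norm_num
  -- main case : 2 < d
  set A := (cyclotomic d ℤ).eval (p : ℤ) with hA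
  have hApos : 0 < A := cyclotomic_pos hd3 _
  set N := A.natAbs with hNdef
  have hNA : ((N : ℕ) : ℤ) = A := Int.natAbs_of_nonneg hApos.le
  have hN1 : 1 < N := by
    have hlow := sub_one_pow_totient_lt_natAbs_cyclotomic_eval (n := d) (q := p)
      (by omega) hp.ne_one
    have h1 : 1 ≤ (p-1)^(d.totient) := Nat.one_le_pow _ _ (by have := hp.two_le; omega)
    omega
  have hd0' : d ≠ 0 := by omega
  by_contra hcon
  push_neg at hcon
  have hall : ∀ r : ℕ, r.Prime → r ∣ N → r ∣ d := by
    intro r hr hrN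
    by_contra hrd
    exact hcon r hr hrd ((Int.natCast_dvd_natCast.2 hrN).trans (Int.natAbs_dvd.2 dvd_rfl))
  have hdvdA : ∀ r : ℕ, r ∣ N → (r : ℤ) ∣ A :=
    fun r hrN => (Int.natCast_dvd_natCast.2 hrN).trans (Int.natAbs_dvd.2 dvd_rfl)
  -- the order of p mod any prime divisor r of N
  have horder : ∀ r : ℕ, r.Prime → r ∣ N →
      orderOf (((p : ℕ) : ℤ) : ZMod r) = ordCompl[r] d :=
    fun r hr hrN => orderOfCast hr hd0' (hdvdA r hrN)
  have hAdvd : A ∣ (p : ℤ)^d - 1 := cycloDvdPowSubOne hd0' _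
  have hne0 : ∀ r : ℕ, r.Prime → r ∣ N → (((p : ℕ) : ℤ) : ZMod r) ≠ 0 := by
    intro r hr hrN
    haveI : Fact r.Prime := ⟨hr⟩
    have hpow : ((((p : ℕ) : ℤ) : ZMod r))^d = 1 := by
      have h1 : (r : ℤ) ∣ (p : ℤ)^d - 1 := (hdvdA r hrN).trans hAdvd
      have h2 := (ZMod.intCast_zmod_eq_zero_iff_dvd _ r).2 h1
      push_cast at h2
      have h3 : ((((p:ℕ):ℤ)) : ZMod r) = ((p : ℕ) : ZMod r) := by push_cast; rfl
      rw [h3]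
      linear_combination h2
    intro h0
    rw [h0, zero_pow hd0'] at hpow
    exact zero_ne_one hpow
  have hcompl_dvd : ∀ r : ℕ, r.Prime → r ∣ N → ordCompl[r] d ∣ r - 1 := by
    intro r hr hrN
    haveI : Fact r.Prime := ⟨hr⟩
    rw [← horder r hr hrN]
    exact ZMod.orderOf_dvd_card_sub_one (hne0 r hr hrN)
  -- uniqueness of prime divisors of N
  have hlt : ∀ r s : ℕ, r.Prime → s.Prime → r ∣ N → s ∣ N → r ≠ s → r < s := by
    intro r s hr hs hrN hsN hrs
    have hrd : r ∣ d := hall r hr hrN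
    have : r ∣ ordCompl[s] d := by
      have h1 : r ∣ s ^ d.factorization s * ordCompl[s] d := by
        rw [Nat.ordProj_mul_ordCompl_eq_self]; exact hrd
      rcases (Nat.Prime.dvd_mul hr).1 h1 with h2 | h2
      · exact absurd ((Nat.prime_dvd_prime_iff_eq hr hs).1 (hr.dvd_of_dvd_pow h2)) hrs
      · exact h2
    have h3 : r ∣ s - 1 := this.trans (hcompl_dvd s hs hsN)
    have h4 : 0 < s - 1 := by have := hs.two_le; omega
    have := Nat.le_of_dvd h4 h3
    have := hr.two_le
    omega
  set q := N.minFac with hqdef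
  have hq : q.Prime := Nat.minFac_prime (by omega)
  have hqN : q ∣ N := Nat.minFac_dvd N
  have huniq : ∀ r : ℕ, r.Prime → r ∣ N → r = q := by
    intro r hr hrN
    by_contra hrq
    have h1 := hlt r q hr hq hrN hqN hrq
    have h2 := hlt q r hq hr hqN hrN (fun h => hrq h.symm)
    omega
  have hNq : N = q ^ N.primeFactorsList.length :=
    Nat.eq_prime_pow_of_unique_prime_dvd (by omega) (fun {r} hr hrN => huniq r hr hrN)
  -- structure of d
  have hqd : q ∣ d := hall q hq hqN
  set m := ordCompl[q] d with hmdef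
  set k := d.factorization q with hkdef
  have hk1 : 1 ≤ k := hq.factorization_pos_of_dvd hd0' hqd
  have hdqm : q ^ k * m = d := Nat.ordProj_mul_ordCompl_eq_self d q
  have hm0 : 0 < m := Nat.ordCompl_pos q hd0'
  have hqm : ¬ q ∣ m := Nat.not_dvd_ordCompl hq hd0'
  set c := q^(k-1) * m with hcdef
  have hcq : c * q = d := by
    rw [← hdqm, hcdef]
    have : q^(k-1) * q = q^k := by
      rw [← pow_succ]
      congr 1
      omega
    calc q^(k-1) * m * q = q^(k-1) * q * m := by ring
      _ = q^k * m := by rw [this]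
  have hc0 : 0 < c := Nat.mul_pos (Nat.pow_pos hq.pos) hm0
  have hmc : m ∣ c := ⟨q^(k-1), by rw [hcdef]; ring⟩
  have hcd : c ∣ d := ⟨q, hcq.symm⟩
  have hclt : c < d := by
    have := hq.two_le
    nlinarith [hcq, hc0]
  -- x = p ^ c
  set x : ℤ := ((p:ℕ) : ℤ)^c with hxdef
  have hordq : orderOf (((p : ℕ) : ℤ) : ZMod q) = m := horder q hq hqN
  have hxc : ((((p:ℕ):ℤ)) : ZMod q)^c = 1 := by
    have : orderOf (((p : ℕ) : ℤ) : ZMod q) ∣ c := hordq ▸ hmc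
    exact orderOf_dvd_iff_pow_eq_one.1 this
  have hx1 : (q : ℤ) ∣ x - 1 := by
    rw [← ZMod.intCast_zmod_eq_zero_iff_dvd, hxdef]
    push_cast
    rw [sub_eq_zero]
    exact_mod_cast hxc
  have hqnp : ¬ q ∣ p := by
    intro hdvd
    apply hne0 q hq hqN
    rw [show ((((p:ℕ):ℤ)) : ZMod q) = ((p : ℕ) : ZMod q) by push_cast; rfl]
    exact (ZMod.natCast_eq_zero_iff p q).2 hdvd
  have h2 : q = 2 → (4 : ℤ) ∣ x - 1 := by
    intro hq2
    -- m ∣ 1 so m = 1, d = 2^k, k ≥ 2, c even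
    have hm1 : m = 1 := Nat.eq_one_of_dvd_one (by
      have h := hcompl_dvd q hq hqN
      rwa [show q - 1 = 1 by omega] at h)
    have hk2 : 2 ≤ k := by
      by_contra hk2
      have hkk : k = 1 := by omega
      rw [hkk, pow_one, hm1, mul_one, hq2] at hdqm
      omega
    have hceven : 2 ∣ c := by
      rw [hcdef, hm1, mul_one, hq2]
      exact dvd_pow_self 2 (by omega)
    obtain ⟨c2, hc2⟩ := hceven
    have hpodd : Odd ((p:ℕ) : ℤ) := by
      rw [← Int.not_even_iff_odd]
      intro hev
      refine hqnp ?_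
      rw [hq2]
      exact ((Int.even_coe_nat p).1 hev).two_dvd
    have hbo : Odd (((p:ℕ):ℤ)^c2) := hpodd.pow
    obtain ⟨t, ht⟩ := hbo
    have : x = (((p:ℕ):ℤ)^c2)^2 := by
      rw [hxdef, ← pow_mul, hc2]
      ring_nf
    rw [this, ht]
    exact ⟨t*t+t, by ring⟩
  -- A divides the geometric sum S
  set S : ℤ := ∑ j ∈ range q, x^j with hSdef
  have hAS : A ∣ S := by
    have h1 : A * ((((p:ℕ):ℤ))^c - 1) ∣ (((p:ℕ):ℤ))^d - 1 := evalMulDvd hcd hclt hd0' _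
    have hgeom : S * (x - 1) = (((p:ℕ):ℤ))^d - 1 := by
      rw [hSdef, geom_sum_mul, hxdef, ← pow_mul, hcq]
    have hx_ne : x - 1 ≠ 0 := by
      have hp1 : (1 : ℤ) < ((p:ℕ):ℤ) := by exact_mod_cast hp.one_lt
      have : (1 : ℤ) < x := one_lt_pow₀ hp1 (by omega)
      omega
    have h2' : A * (x - 1) ∣ S * (x - 1) := by rw [hgeom, hxdef]; exact h1
    exact (mul_dvd_mul_iff_right hx_ne).1 h2'
  have hnsq : ¬ ((q:ℤ))^2 ∣ A := fun hsq => geomSumNotSqDvd hq hx1 h2 (hsq.trans hAS)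
  have hlen : N.primeFactorsList.length = 1 := by
    rcases Nat.lt_or_ge N.primeFactorsList.length 2 with hl | hl
    · have : N.primeFactorsList.length ≠ 0 := by
        intro h0
        rw [h0, pow_zero] at hNq
        omega
      omega
    · exfalso
      apply hnsq
      have h1 : q^2 ∣ N := hNq ▸ pow_dvd_pow q hl
      calc ((q:ℤ))^2 = ((q^2 : ℕ) : ℤ) := by push_cast; ring
        _ ∣ (N : ℤ) := Int.natCast_dvd_natCast.2 h1
        _ = A := hNA
  have hNeq : N = q := by rw [hNq, hlen, pow_one]
  -- size contradiction
  have hphi0 : 0 < d.totient := Nat.totient_pos.2 hd0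
  have hqphi : q - 1 ≤ d.totient := by
    have h1 : (q - 1) ∣ d.totient := by
      have := Nat.totient_dvd_of_dvd hqd
      rwa [Nat.totient_prime hq] at this
    exact Nat.le_of_dvd hphi0 h1
  have hlow : (p - 1)^(d.totient) < N :=
    sub_one_pow_totient_lt_natAbs_cyclotomic_eval (by omega) hp.ne_one
  rcases Nat.lt_or_ge p 3 with hp3 | hp3
  · -- p = 2
    have hp2 : p = 2 := by have := hp.two_le; omega
    rcases eq_or_ne q 2 with hq2 | hq2
    · -- q = 2 divides the odd number 2^d - 1 : contradiction
      have h1 : (q : ℤ) ∣ ((p:ℕ):ℤ)^d - 1 := (hdvdA q hqN).trans hAdvd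
      rw [hq2, hp2] at h1
      have h2' : ((2:ℕ) : ℤ) ∣ ((2:ℕ):ℤ)^d := dvd_pow_self _ hd0'
      have h3 := dvd_sub h2' h1
      have h4 : ((2:ℕ):ℤ)^d - (((2:ℕ):ℤ)^d - 1) = 1 := by ring
      rw [h4] at h3
      norm_num at h3
    · -- q odd
      have hq3 : 3 ≤ q := by have := hq.two_le; omega
      have h2m : 2 ∣ m := by
        have h1 : 2 ∣ q ^ k * m := by rw [hdqm, ← hp2]; exact hpd
        rcases (Nat.Prime.dvd_mul Nat.prime_two).1 h1 with h | h
        · exact absurd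
            ((Nat.prime_dvd_prime_iff_eq Nat.prime_two hq).1 (Nat.prime_two.dvd_of_dvd_pow h))
            (fun hh => by omega)
        · exact h
      have hm2 : 2 ≤ m := Nat.le_of_dvd hm0 h2m
      have hq2pow : q + 2 ≤ 2^q := by
        have ha : q - 1 + 1 ≤ 2^(q-1) := Nat.succ_le_of_lt (Nat.lt_two_pow_self (n := q-1))
        have ha' : q ≤ 2^(q-1) := by
          rwa [show q - 1 + 1 = q by omega] at ha
        have hb : 2*q ≤ 2*2^(q-1) := Nat.mul_le_mul_left 2 ha'
        have hc : 2*2^(q-1) = 2^q := by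
          rw [← pow_succ']
          congr 1
          omega
        calc q + 2 ≤ 2*q := by omega
          _ ≤ 2*2^(q-1) := hb
          _ = 2^q := hc
      rcases Nat.lt_or_ge k 2 with hk2 | hk2
      · -- k = 1 : d = q * m
        have hk1' : k = 1 := by omega
        have hdm : d = q * m := by rw [← hdqm, hk1', pow_one]
        have hq5 : 5 ≤ q := by
          rcases eq_or_ne q 3 with hq3' | hq3'
          · exfalso
            have h1 : m ∣ 2 := by
              have hh : m ∣ q - 1 := hcompl_dvd q hq hqN
              rwa [show q - 1 = 2 by omega] at hh
            have hm2' : m = 2 := Nat.dvd_antisymm h1 h2m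
            exact h26 ⟨hp2, by rw [hdm, hq3', hm2']⟩
          · have hq4 : q ≠ 4 := fun h => by rw [h] at hq; norm_num at hq
            omega
        have hmq : m * q = d := by rw [hdm, mul_comm]
        have hm1 : 1 < m := hm2
        have hphim : 0 < m.totient := Nat.totient_pos.2 hm0
        -- the expand identity Φ_m(2^q) = Φ_d(2) * Φ_m(2)
        have hkey : (cyclotomic m ℤ).eval (((2:ℕ):ℤ)^q)
            = (cyclotomic d ℤ).eval ((2:ℕ):ℤ) * (cyclotomic m ℤ).eval ((2:ℕ):ℤ) := by
          have h0 := congrArg (Polynomial.eval ((2:ℕ):ℤ))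
            (cyclotomic_expand_eq_cyclotomic_mul hq hqm ℤ)
          rw [expand_eval, eval_mul, hmq] at h0
          exact h0
        set Bn := ((cyclotomic m ℤ).eval ((2:ℕ):ℤ)).natAbs with hBndef
        set Cn := ((cyclotomic m ℤ).eval (((2:ℕ):ℤ)^q)).natAbs with hCndef
        have hNB : ((cyclotomic d ℤ).eval ((2:ℕ):ℤ)).natAbs = q := by
          rw [← hNeq, hNdef, hA, hp2]
        have hCeq : Cn = q * Bn := by
          rw [hCndef, hkey, Int.natAbs_mul, hNB]
        have hC : (2^q - 1)^(m.totient) < Cn := by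
          have hbase : (((2^q : ℕ)) : ℤ) = ((2:ℕ):ℤ)^q := by push_cast; ring
          have h := sub_one_pow_totient_lt_natAbs_cyclotomic_eval (n := m) (q := 2^q)
            hm1 (Nat.one_lt_two_pow_iff.mpr (by omega : q ≠ 0)).ne' 
          rwa [hbase] at h
        have hBpos : 0 < (cyclotomic m ℤ).eval ((2:ℕ):ℤ) :=
          cyclotomic_pos' m (by norm_num)
        have hB : Bn ≤ 3^(m.totient) := by
          have hreal : ((((cyclotomic m ℤ).eval ((2:ℕ):ℤ) : ℤ)) : ℝ) ≤ 3^(m.totient) := by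
            have h1 := cyclotomic_eval_le_add_one_pow_totient (q := (2:ℝ)) (by norm_num) m
            have h2 : (cyclotomic m ℝ).eval (2:ℝ) = ((((cyclotomic m ℤ).eval ((2:ℕ):ℤ) : ℤ)) : ℝ) := by
              have h3 := cyclotomic.eval_apply ((2:ℕ):ℤ) m (algebraMap ℤ ℝ)
              simpa using h3
            rw [h2] at h1
            convert h1 using 2
            norm_num
          have hBn' : ((Bn : ℕ) : ℤ) = (cyclotomic m ℤ).eval ((2:ℕ):ℤ) :=
            Int.natAbs_of_nonneg hBpos.le
          have h4 : ((Bn : ℕ) : ℝ) ≤ (3:ℝ)^(m.totient) := by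
            have : ((Bn : ℕ) : ℝ) = ((((cyclotomic m ℤ).eval ((2:ℕ):ℤ) : ℤ)) : ℝ) := by
              exact_mod_cast congrArg (fun z : ℤ => (z : ℝ)) hBn'
            rw [this]
            exact hreal
          exact_mod_cast h4
        have h3q : 3*q + 1 ≤ 2^q := threeMul q hq5
        have c2 : (3*q)^(m.totient) ≤ (2^q - 1)^(m.totient) :=
          Nat.pow_le_pow_left
            (Nat.le_sub_one_of_lt (Nat.lt_of_lt_of_le (Nat.lt_succ_self (3*q)) h3q)) _
        have c3 : q * 3^(m.totient) ≤ (3*q)^(m.totient) := by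
          rw [mul_pow]
          calc q * 3^(m.totient) = 3^(m.totient) * q := mul_comm _ _
            _ ≤ 3^(m.totient) * q^(m.totient) :=
              Nat.mul_le_mul_left _ (Nat.le_self_pow hphim.ne' q)
        have hfin : Cn < Cn := by
          calc Cn = q * Bn := hCeq
            _ ≤ q * 3^(m.totient) := Nat.mul_le_mul_left q hB
            _ ≤ (3*q)^(m.totient) := c3
            _ ≤ (2^q - 1)^(m.totient) := c2
            _ < Cn := hC
        exact lt_irrefl _ hfin
      · -- k ≥ 2
        have hNev : ((cyclotomic (q*m) ℤ).eval ((((2:ℕ):ℤ))^(q^(k-1)))).natAbs = q := by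
          have he : (cyclotomic d ℤ).eval ((2:ℕ):ℤ)
              = (cyclotomic (q*m) ℤ).eval ((((2:ℕ):ℤ))^(q^(k-1))) := by
            conv_lhs => rw [← hdqm]
            exact cycloPrimePowEval hq hk1 _
          rw [← he, ← hNeq, hNdef, hA, hp2]
        have hqm1 : 1 < q * m := by
          calc 1 < q := by omega
            _ ≤ q * m := Nat.le_mul_of_pos_right q hm0
        have hbase : (((2^(q^(k-1)) : ℕ)) : ℤ) = ((2:ℕ):ℤ)^(q^(k-1)) := by push_cast; ring
        have hNlow := sub_one_pow_totient_lt_natAbs_cyclotomic_eval (n := q*m)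
          (q := 2^(q^(k-1))) hqm1
          (Nat.one_lt_two_pow_iff.mpr (pow_ne_zero _ (by omega : q ≠ 0))).ne' 
        rw [hbase, hNev] at hNlow
        have hpowle : 2^q ≤ 2^(q^(k-1)) :=
          Nat.pow_le_pow_right (by norm_num) (Nat.le_self_pow (by omega) q)
        have hphiqm : 0 < (q*m).totient := Nat.totient_pos.2 (by omega)
        have hfin : q + 1 < q := by
          calc q + 1 = (q + 2) - 1 := by omega
            _ ≤ 2^q - 1 := Nat.sub_le_sub_right hq2pow 1
            _ ≤ 2^(q^(k-1)) - 1 := Nat.sub_le_sub_right hpowle 1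
            _ ≤ (2^(q^(k-1)) - 1)^((q*m).totient) := Nat.le_self_pow hphiqm.ne' _
            _ < q := hNlow
        omega
  · -- 3 ≤ p
    have h4 : q ≤ 2^(d.totient) := by
      calc q ≤ d.totient + 1 := by omega
        _ ≤ 2^(d.totient) := Nat.succ_le_of_lt (Nat.lt_two_pow_self)
    have h5 : q < q := by
      calc q ≤ 2^(d.totient) := h4
        _ ≤ (p-1)^(d.totient) := Nat.pow_le_pow_left (by omega) _
        _ < N := hlow
        _ = q := hNeq
    exact lt_irrefl _ h5

/-- **Lemma 5.3.** Let `h = Φ_{d₁}^{e₁} ⋯ Φ_{d_m}^{e_m}` with `d₁, …, d_m`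
distinct positive integers and `e₁, …, e_m` positive integers, and suppose `h(p) ∣ h(p^p)` for
every prime `p`. Let `𝒜 = {d₁,…,d_m}` and let `pk` be the largest prime dividing
`lcm(d₁,…,d_m)`. If `d ∈ 𝒜` with `pk ∣ d`, and `pi` is a prime with `pi ∣ d` and
`(pi, d) ≠ (2,6)`, then `d / pi ∈ 𝒜`. -/
theorem stmt_13 (m : ℕ) (dfun : Fin m → ℕ) (e : Fin m → ℕ)
    (hd : ∀ i, 0 < dfun i) (hdinj : Function.Injective dfun) (he : ∀ i, 0 < e i)
    (h : Polynomial ℤ) (hh : h = ∏ i, (cyclotomic (dfun i) ℤ) ^ (e i))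
    (hdvd : ∀ p : ℕ, p.Prime → h.eval (p : ℤ) ∣ h.eval ((p : ℤ) ^ p))
    (pk : ℕ) (hpk : pk.Prime) (hpkdvd : pk ∣ Finset.univ.lcm dfun)
    (hpkmax : ∀ q : ℕ, q.Prime → q ∣ Finset.univ.lcm dfun → q ≤ pk)
    (d : ℕ) (hdA : ∃ i, dfun i = d) (hpkd : pk ∣ d)
    (pi : ℕ) (hpi : pi.Prime) (hpid : pi ∣ d) (hpi26 : ¬(pi = 2 ∧ d = 6)) :
    ∃ j, dfun j = d / pi := by
  obtain ⟨i₀, hi₀⟩ := hdA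
  have hd0 : 0 < d := hi₀ ▸ hd i₀
  obtain ⟨q, hq, hqd, hqA⟩ := zsygmondy hpi hd0 hpid hpi26
  haveI : Fact q.Prime := ⟨hq⟩
  -- the order of pi mod q is exactly d
  have hord : orderOf (((pi:ℕ):ℤ) : ZMod q) = d := by
    have h1 := orderOfCast hq (by omega) hqA
    rwa [Nat.factorization_eq_zero_of_not_dvd hqd, pow_zero, Nat.div_one] at h1
  -- q divides h(pi), hence h(pi^pi)
  have hΦh : (cyclotomic d ℤ).eval ((pi:ℕ):ℤ) ∣ h.eval ((pi:ℕ):ℤ) := by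
    rw [hh, eval_prod]
    calc (cyclotomic d ℤ).eval ((pi:ℕ):ℤ)
        ∣ ((cyclotomic (dfun i₀) ℤ)^(e i₀)).eval ((pi:ℕ):ℤ) := by
          rw [eval_pow, hi₀]
          exact dvd_pow_self _ (he i₀).ne'
      _ ∣ ∏ i, ((cyclotomic (dfun i) ℤ)^(e i)).eval ((pi:ℕ):ℤ) :=
          Finset.dvd_prod_of_mem _ (Finset.mem_univ i₀)
  have hqhp : (q:ℤ) ∣ h.eval (((pi:ℕ):ℤ)^pi) := ((hqA.trans hΦh).trans (hdvd pi hpi))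
  -- find the factor that q divides
  have hex : ∃ j ∈ Finset.univ, (q:ℤ) ∣ ((cyclotomic (dfun j) ℤ)^(e j)).eval (((pi:ℕ):ℤ)^pi) := by
    apply (Nat.prime_iff_prime_int.1 hq).exists_mem_finset_dvd
    rw [hh, eval_prod] at hqhp
    exact hqhp
  obtain ⟨j, -, hj⟩ := hex
  have hjdvd : (q:ℤ) ∣ (cyclotomic (dfun j) ℤ).eval (((pi:ℕ):ℤ)^pi) := by
    rw [eval_pow] at hj
    exact (Nat.prime_iff_prime_int.1 hq).dvd_of_dvd_pow hj
  have hn0 : dfun j ≠ 0 := (hd j).ne'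
  -- pi is nonzero mod q, so d divides q - 1
  have hpine0 : (((pi:ℕ):ℤ) : ZMod q) ≠ 0 := by
    intro h0
    have h1 := pow_orderOf_eq_one (((pi:ℕ):ℤ) : ZMod q)
    rw [hord, h0, zero_pow (by omega)] at h1
    exact zero_ne_one h1
  have hddvd : d ∣ q - 1 := by
    rw [← hord]
    exact ZMod.orderOf_dvd_card_sub_one hpine0
  -- q does not divide dfun j
  have hqn : ¬ q ∣ dfun j := by
    intro hqn
    have h1 : q ∣ Finset.univ.lcm dfun := hqn.trans (Finset.dvd_lcm (Finset.mem_univ j))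
    have h2 : q ≤ pk := hpkmax q hq h1
    have h3 : pk ∣ q - 1 := hpkd.trans hddvd
    have h4 : pk ≤ q - 1 := Nat.le_of_dvd (by have := hq.two_le; omega) h3
    have := hq.two_le
    omega
  -- the order of pi^pi mod q is dfun j
  have hord2 : orderOf ((((pi:ℕ):ℤ)^pi : ℤ) : ZMod q) = dfun j := by
    have h1 := orderOfCast hq hn0 hjdvd
    rwa [Nat.factorization_eq_zero_of_not_dvd hqn, pow_zero, Nat.div_one] at h1
  have hcast : ((((pi:ℕ):ℤ)^pi : ℤ) : ZMod q) = ((((pi:ℕ):ℤ)) : ZMod q)^pi := by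
    push_cast
    rfl
  rw [hcast] at hord2
  have hfin : IsOfFinOrder (((pi:ℕ):ℤ) : ZMod q) := by
    rw [← orderOf_pos_iff, hord]
    omega
  rw [hfin.orderOf_pow, hord] at hord2
  have hgcd : Nat.gcd d pi = pi := by
    rw [Nat.gcd_comm]
    exact Nat.gcd_eq_left hpid
  rw [hgcd] at hord2
  exact ⟨j, hord2.symm⟩
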